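/- Let p > 5 be a prime with −1 a quadratic residue and 2, 3 quadratic non-residues mod p. Define the path system 𝒫_p on the Paley graph G_p by: P_{a,b} = (a,b) if b−a is a quadratic residue; P_{a,b} = (a, a+1, a+2, b) if b−a = 3; and P_{a,b} = (a, (a+b)/2, b) if b−a is a non-residue with b−a ≠ ±3. Then 𝒫_p is a well-defined path system: each listed sequence is a simple path in G_p, and every pair of distinct vertices is assigned exactly one path. -/

import Mathlib

open scoped Classical

/-- `a` is a (nonzero) quadratic residue in `ZMod p`. -/
def IsQR (p : ℕ) (a : ZMod p) : Prop := a ≠ 0 ∧ IsSquare a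

/-- The Paley graph on `𝔽_p`: `a ~ b` iff `a - b` is a nonzero quadratic residue.
(The adjacency is stated symmetrically; when `-1` is a residue this agrees with
the usual definition.) -/
def paley (p : ℕ) : SimpleGraph (ZMod p) where
  Adj a b := a ≠ b ∧ IsSquare (a - b) ∧ IsSquare (b - a)
  symm := by refine ⟨?_⟩; intro a b h; exact ⟨h.1.symm, h.2.2, h.2.1⟩
  loopless := by refine ⟨?_⟩; intro a h; exact h.1 rfl

/-- The list of vertices of the path `P_{a,b}` of the path system `𝒫_p`. -/
noncomputable def specList (p : ℕ) (a b : ZMod p) : List (ZMod p) :=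
  if IsQR p (b - a) then [a, b]
  else if b - a = 3 then [a, a + 1, a + 2, b]
  else [a, (a + b) * (2 : ZMod p)⁻¹, b]

lemma key_lemma (p : ℕ) [Fact p.Prime] (hp : 5 < p)
    (h1 : IsQR p (-1)) (h2 : ¬ IsQR p 2) (h3 : ¬ IsQR p 3) :
    ∀ a b : ZMod p, a ≠ b →
      ∃ w : (paley p).Walk a b, w.IsPath ∧ w.support = specList p a b := by
  haveI : NeZero p := ⟨by omega⟩
  have hcast : ∀ n : ℕ, 0 < n → n < p → (n : ZMod p) ≠ 0 := by
    intro n h0 h h'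
    rw [ZMod.natCast_eq_zero_iff] at h'
    exact absurd (Nat.le_of_dvd h0 h') (by omega)
  have hone : (1 : ZMod p) ≠ 0 := one_ne_zero
  have h2ne : (2 : ZMod p) ≠ 0 := by
    have := hcast 2 (by norm_num) (by omega); exact_mod_cast this
  have h3ne : (3 : ZMod p) ≠ 0 := by
    have := hcast 3 (by norm_num) (by omega); exact_mod_cast this
  have hm1 : IsSquare (-1 : ZMod p) := h1.2
  have hsq1 : IsSquare (1 : ZMod p) := ⟨1, (mul_one 1).symm⟩
  have key4 : ∀ x y : ZMod p, y - x ≠ 0 → x ≠ y := by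
    intro x y h0 h; exact h0 (by rw [h, sub_self])
  have adjd : ∀ x y : ZMod p, y - x ≠ 0 → IsSquare (y - x) → (paley p).Adj x y := by
    intro x y h0 hs
    refine ⟨key4 x y h0, ?_, hs⟩
    have : x - y = -1 * (y - x) := by ring
    rw [this]; exact hm1.mul hs
  have nsmul : ∀ x y : ZMod p, x ≠ 0 → y ≠ 0 → ¬IsSquare x → ¬IsSquare y →
      IsSquare (x * y) := by
    intro x y hx0 hy0 hx hy
    have hx' := quadraticChar_neg_one_iff_not_isSquare.mpr hx
    have hy' := quadraticChar_neg_one_iff_not_isSquare.mpr hy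
    have hxy0 : x * y ≠ 0 := mul_ne_zero hx0 hy0
    rw [← quadraticChar_one_iff_isSquare hxy0, map_mul, hx', hy']
    norm_num
  intro a b hab
  have hba0 : b - a ≠ 0 := fun h => hab (by linear_combination -h)
  by_cases hQR : IsQR p (b - a)
  · refine ⟨SimpleGraph.Walk.cons (adjd a b hba0 hQR.2) SimpleGraph.Walk.nil, ?_, ?_⟩
    · rw [SimpleGraph.Walk.isPath_def]
      simp [hab]
    · simp [specList, hQR]
  · by_cases hd3 : b - a = 3
    · have hb : b = a + 3 := by linear_combination hd3
      subst hb
      have n01 : a ≠ a + 1 := key4 _ _ (by simpa using hone)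
      have n02 : a ≠ a + 1 + 1 := key4 _ _ (by rw [show a+1+1-a = 2 by ring]; exact h2ne)
      have n03 : a ≠ a + 3 := key4 _ _ (by simpa using h3ne)
      have n12 : a + 1 ≠ a + 1 + 1 := key4 _ _ (by rw [show a+1+1-(a+1) = 1 by ring]; exact hone)
      have n13 : a + 1 ≠ a + 3 := key4 _ _ (by rw [show a+3-(a+1) = 2 by ring]; exact h2ne)
      have n23 : a + 1 + 1 ≠ a + 3 := key4 _ _ (by rw [show a+3-(a+1+1) = 1 by ring]; exact hone)
      have e1 : (paley p).Adj a (a+1) := adjd _ _ (by simpa using hone) (by simpa using hsq1)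
      have e2 : (paley p).Adj (a+1) (a+1+1) :=
        adjd _ _ (by rw [show a+1+1-(a+1) = 1 by ring]; exact hone)
          (by rw [show a+1+1-(a+1) = 1 by ring]; exact hsq1)
      have e3 : (paley p).Adj (a+1+1) (a+3) :=
        adjd _ _ (by rw [show a+3-(a+1+1) = 1 by ring]; exact hone)
          (by rw [show a+3-(a+1+1) = 1 by ring]; exact hsq1)
      refine ⟨.cons e1 (.cons e2 (.cons e3 .nil)), ?_, ?_⟩
      · rw [SimpleGraph.Walk.isPath_def]
        simp [n01, n02, n03, n12, n13, n23]
      · rw [specList, if_neg hQR, if_pos hd3]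
        simp only [SimpleGraph.Walk.support_cons, SimpleGraph.Walk.support_nil]
        norm_num [add_assoc]
    · -- midpoint case
      simp only [IsQR, not_and] at h2 h3 hQR
      have hns2 : ¬IsSquare (2 : ZMod p) := h2 h2ne
      have hnsba : ¬IsSquare (b - a) := hQR hba0
      have hinv : ((2 : ZMod p))⁻¹ ≠ 0 := inv_ne_zero h2ne
      have hs2 : IsSquare ((b - a) * 2) := nsmul _ _ hba0 h2ne hnsba hns2
      have hrw : (b - a) * (2:ZMod p)⁻¹ = ((b - a) * 2) * ((2:ZMod p)⁻¹ * (2:ZMod p)⁻¹) := by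
        field_simp
      have hsm : IsSquare ((b - a) * (2:ZMod p)⁻¹) := by
        rw [hrw]; exact hs2.mul ⟨(2:ZMod p)⁻¹, rfl⟩
      set m : ZMod p := (a + b) * (2:ZMod p)⁻¹ with hm
      have hma : m - a = (b - a) * (2:ZMod p)⁻¹ := by
        rw [hm]; field_simp; ring
      have hbm : b - m = (b - a) * (2:ZMod p)⁻¹ := by
        rw [hm]; field_simp; ring
      have hd0 : (b - a) * (2:ZMod p)⁻¹ ≠ 0 := mul_ne_zero hba0 hinv
      have e1 : (paley p).Adj a m := adjd _ _ (by rw [hma]; exact hd0) (by rw [hma]; exact hsm)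
      have e2 : (paley p).Adj m b := adjd _ _ (by rw [hbm]; exact hd0) (by rw [hbm]; exact hsm)
      have nam : a ≠ m := key4 _ _ (by rw [hma]; exact hd0)
      have nmb : m ≠ b := key4 _ _ (by rw [hbm]; exact hd0)
      refine ⟨.cons e1 (.cons e2 .nil), ?_, ?_⟩
      · rw [SimpleGraph.Walk.isPath_def]
        simp [nam, nmb, hab]
      · rw [specList, if_neg (fun h => hQR h.1 h.2), if_neg hd3]
        simp [hm]

theorem stmt_9 (p : ℕ) [Fact p.Prime] (hp : 5 < p)
    (h1 : IsQR p (-1)) (h2 : ¬ IsQR p 2) (h3 : ¬ IsQR p 3) :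
    ∃ P : ∀ a b : ZMod p, (paley p).Walk a b,
      ∀ a b : ZMod p, a ≠ b →
        (P a b).IsPath ∧ (P a b).support = specList p a b := by
  have key : ∀ a b : ZMod p, a ≠ b →
      ∃ w : (paley p).Walk a b, w.IsPath ∧ w.support = specList p a b :=
    key_lemma p hp h1 h2 h3
  refine ⟨fun a b => if h : a = b then h ▸ SimpleGraph.Walk.nil else (key a b h).choose,
    fun a b hab => ?_⟩
  simp only [dif_neg hab]
  exact (key a b hab).choose_spec
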